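/- In the setting of the previous statement, for each partition Σ and each i with ξ_𝔡 defined at x_i^Σ, the local multiplicity of ξ_𝔡 at x_i^Σ equals ∏_{j=1}^r C(2n_j, n_j). Conversely, any F ∈ ξ_𝔡^{−1}(H) with mult_F ξ_𝔡 = ∏_{j=1}^r C(2n_j, n_j) equals x_j^Σ for some partition Σ and index j. -/

import Mathlib

open Finsupp

/-- strict monotonicity of `choose (2m) ·` below the middle. -/
lemma choose_lt_choose_middle {m k : ℕ} (hk : k < m) :
    Nat.choose (2 * m) k < Nat.choose (2 * m) m := by
  have step : ∀ a, a < m → Nat.choose (2*m) a < Nat.choose (2*m) (a+1) := by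
    intro a ha
    have hpos : 0 < Nat.choose (2*m) a := Nat.choose_pos (by omega)
    have h := Nat.choose_succ_right_eq (2*m) a
    have : Nat.choose (2*m) a * (a+1) < Nat.choose (2*m) (a+1) * (a+1) := by
      rw [h]
      have : a + 1 < 2*m - a := by omega
      exact Nat.mul_lt_mul_of_pos_left this hpos
    exact Nat.lt_of_mul_lt_mul_right this
  have : ∀ d, ∀ k, k + d = m → k < m → Nat.choose (2*m) k < Nat.choose (2*m) m := by
    intro d
    induction d with
    | zero => intro k h1 h2; omega
    | succ d ih =>
      intro k h1 h2
      rcases Nat.eq_or_lt_of_le (Nat.succ_le_of_lt h2) with h | h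
      · have hs := step k (by omega)
        rw [show k + 1 = m by omega] at hs; exact hs
      · exact lt_trans (step k h2) (ih (k+1) (by omega) (by omega))
  exact this (m - k) k (by omega) hk

lemma choose_eq_middle {m k : ℕ} (hm : 0 < m) (hk : k ≤ 2 * m)
    (h : Nat.choose (2 * m) k = Nat.choose (2 * m) m) : k = m := by
  rcases lt_trichotomy k m with hlt | he | hgt
  · exact absurd h (Nat.ne_of_lt (choose_lt_choose_middle hlt))
  · exact he
  · have h2 : Nat.choose (2*m) (2*m - k) = Nat.choose (2*m) k := Nat.choose_symm hk
    have hlt : 2*m - k < m := by omega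
    have := choose_lt_choose_middle hlt
    omega

/-- products of positive naturals: termwise `≤` plus equal products forces equality. -/
lemma prod_eq_of_le_of_prod_eq {ι : Type*} {s : Finset ι} {f g : ι → ℕ}
    (hpos : ∀ i ∈ s, 0 < f i) (hle : ∀ i ∈ s, f i ≤ g i)
    (h : ∏ i ∈ s, f i = ∏ i ∈ s, g i) : ∀ i ∈ s, f i = g i := by
  classical
  induction s using Finset.induction_on with
  | empty => intro i hi; simp at hi
  | insert _ _ ha ih =>
    rename_i a s
    intro i hi
    rw [Finset.prod_insert ha, Finset.prod_insert ha] at h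
    have hfpos : 0 < ∏ j ∈ s, f j := Finset.prod_pos (fun j hj => hpos j (Finset.mem_insert_of_mem hj))
    have hfa : 0 < f a := hpos a (Finset.mem_insert_self a s)
    have h1 : ∏ j ∈ s, f j ≤ ∏ j ∈ s, g j :=
      Finset.prod_le_prod (fun j hj => Nat.zero_le _) (fun j hj => hle j (Finset.mem_insert_of_mem hj))
    have h2 : f a ≤ g a := hle a (Finset.mem_insert_self a s)
    have heq1 : f a = g a := by nlinarith
    have heq2 : ∏ j ∈ s, f j = ∏ j ∈ s, g j := by nlinarith
    rcases Finset.mem_insert.mp hi with rfl | hi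
    · exact heq1
    · exact ih (fun j hj => hpos j (Finset.mem_insert_of_mem hj))
        (fun j hj => hle j (Finset.mem_insert_of_mem hj)) heq2 i hi

theorem partition_points_multiplicity
    {C : Type*}
    (n ℓ : ℕ) (hℓ : 3 ≤ ℓ) (hn : ℓ - 1 ≤ n)
    (𝔡 : Set (C →₀ ℕ))                            -- 𝔡 ⊆ |η^⊗2| of degree 2n
    (hdeg𝔡 : ∀ G ∈ 𝔡, (G.sum fun _ m => m) = 2 * n)
    (r : ℕ) (nn : Fin r → ℕ) (hnn : ∀ j, 0 < nn j)
    (z : Fin r → C) (P : Fin (2 * ℓ - 2) → C)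
    (hdist : Function.Injective (Sum.elim P z))   -- the P i and z j are distinct
    (E : C →₀ ℕ) (hE : E = ∑ j, nn j • single (z j) 1)
    (hdegE : (∑ j, nn j) = n + 1 - ℓ)             -- deg E = n - ℓ + 1
    (H : C →₀ ℕ) (hH : H = (∑ i, single (P i) 1) + 2 • E)
    (hH𝔡 : H ∈ 𝔡)                                 -- H ∈ 𝔡_{n-ℓ+1}
    (mult : (C →₀ ℕ) → ℕ)                          -- local multiplicity of ξ_𝔡
    -- the multiplicity of ξ_𝔡 at F ≤ H in the fiber over H is ∏ C(H c, F c):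
    (hmult : ∀ F : C →₀ ℕ, F ≤ H → (F.sum fun _ m => m) = n →
      mult F = ∏ c ∈ H.support, Nat.choose (H c) (F c))
    -- the points x i ^ σ attached to a partition σ:
    (x : (Fin ℓ ⊕ Fin (ℓ - 2) ≃ Fin (2 * ℓ - 2)) → Fin ℓ → (C →₀ ℕ))
    (hx : ∀ σ i, x σ i = single (P (σ (Sum.inl i))) 1 +
      (∑ j, single (P (σ (Sum.inr j))) 1) + E) :
    -- (2): the multiplicity of ξ_𝔡 at x i ^ σ, where defined, is ∏ C(2 nn j, nn j)
    (∀ σ i, (∃! G, G ∈ 𝔡 ∧ x σ i ≤ G) →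
      mult (x σ i) = ∏ j, Nat.choose (2 * nn j) (nn j)) ∧
    -- converse: any F in the fiber over H of that multiplicity is some x i ^ σ
    (∀ F : C →₀ ℕ, (F.sum fun _ m => m) = n → F ≤ H →
      (∀ G ∈ 𝔡, F ≤ G → G = H) →                  -- F ∈ ξ_𝔡⁻¹(H)
      mult F = ∏ j, Nat.choose (2 * nn j) (nn j) →
      ∃ σ i, F = x σ i) := by
  classical
  -- injectivity facts
  have hP : Function.Injective P := by
    intro a b h
    have := hdist (show Sum.elim P z (Sum.inl a) = Sum.elim P z (Sum.inl b) from h)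
    simpa using this
  have hz : Function.Injective z := by
    intro a b h
    have := hdist (show Sum.elim P z (Sum.inr a) = Sum.elim P z (Sum.inr b) from h)
    simpa using this
  have hPz : ∀ k j, P k ≠ z j := by
    intro k j h
    simpa using hdist (show Sum.elim P z (Sum.inl k) = Sum.elim P z (Sum.inr j) from h)
  -- rewrite E with singles
  have hE' : E = ∑ j, single (z j) (nn j) := by
    rw [hE]
    exact Finset.sum_congr rfl (fun j _ => by rw [Finsupp.smul_single, smul_eq_mul, mul_one])
  -- pointwise values
  have hAP : ∀ k, (∑ i, (single (P i) 1 : C →₀ ℕ)) (P k) = 1 := by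
    intro k
    rw [Finsupp.finset_sum_apply, Finset.sum_eq_single k]
    · simp
    · intro b _ hb
      rw [Finsupp.single_apply, if_neg (fun hc => hb (hP hc))]
    · intro h; exact absurd (Finset.mem_univ k) h
  have hA0 : ∀ c, (∀ k, P k ≠ c) → (∑ i, (single (P i) 1 : C →₀ ℕ)) c = 0 := by
    intro c hc
    rw [Finsupp.finset_sum_apply]
    exact Finset.sum_eq_zero (fun b _ => by rw [Finsupp.single_apply, if_neg (hc b)])
  have hEz : ∀ j, E (z j) = nn j := by
    intro j
    rw [hE', Finsupp.finset_sum_apply, Finset.sum_eq_single j]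
    · simp
    · intro b _ hb
      rw [Finsupp.single_apply, if_neg (fun hc => hb (hz hc))]
    · intro h; exact absurd (Finset.mem_univ j) h
  have hE0 : ∀ c, (∀ j, z j ≠ c) → E c = 0 := by
    intro c hc
    rw [hE', Finsupp.finset_sum_apply]
    exact Finset.sum_eq_zero (fun b _ => by rw [Finsupp.single_apply, if_neg (hc b)])
  have hEP : ∀ k, E (P k) = 0 := fun k => hE0 (P k) (fun j h => hPz k j h.symm)
  have hHP : ∀ k, H (P k) = 1 := by
    intro k
    rw [hH, Finsupp.add_apply, hAP k, Finsupp.smul_apply, hEP k, smul_zero]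
    omega
  have hHz : ∀ j, H (z j) = 2 * nn j := by
    intro j
    rw [hH, Finsupp.add_apply, hA0 _ (fun k => hPz k j), Finsupp.smul_apply, hEz j,
      zero_add, smul_eq_mul]
  have hH0 : ∀ c, (∀ k, P k ≠ c) → (∀ j, z j ≠ c) → H c = 0 := by
    intro c h1 h2
    rw [hH, Finsupp.add_apply, hA0 c h1, Finsupp.smul_apply, hE0 c h2, smul_zero]
    omega
  -- support of H
  have hsupp : H.support = (Finset.univ.image P) ∪ (Finset.univ.image z) := by
    ext c
    simp only [Finsupp.mem_support_iff, Finset.mem_union, Finset.mem_image, Finset.mem_univ,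
      true_and]
    constructor
    · intro h
      by_contra hc
      push_neg at hc
      exact h (hH0 c (fun k => hc.1 k) (fun j => hc.2 j))
    · rintro (⟨k, rfl⟩ | ⟨j, rfl⟩)
      · rw [hHP]; omega
      · rw [hHz]; have := hnn j; omega
  have hdisjPZ : Disjoint (Finset.univ.image P) (Finset.univ.image z) := by
    rw [Finset.disjoint_left]
    intro c hcP hcz
    rw [Finset.mem_image] at hcP hcz
    obtain ⟨k, -, rfl⟩ := hcP
    obtain ⟨j, -, hj⟩ := hcz
    exact hPz k j hj.symm
  -- key product formula over the support of H
  have key : ∀ F : C →₀ ℕ, (∀ k, F (P k) ≤ 1) →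
      (∏ c ∈ H.support, Nat.choose (H c) (F c)) = ∏ j, Nat.choose (2 * nn j) (F (z j)) := by
    intro F hF1
    rw [hsupp, Finset.prod_union hdisjPZ,
      Finset.prod_image (fun a _ b _ h => hP h), Finset.prod_image (fun a _ b _ h => hz h)]
    have h1 : ∏ k, Nat.choose (H (P k)) (F (P k)) = 1 := by
      apply Finset.prod_eq_one
      intro k _
      rw [hHP k]
      have := hF1 k
      interval_cases (F (P k)) <;> simp
    rw [h1, one_mul]
    exact Finset.prod_congr rfl (fun j _ => by rw [hHz j])
  -- degrees
  have hdegE' : (E.sum fun _ m => m) = n + 1 - ℓ := by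
    rw [hE', ← Finsupp.sum_finset_sum_index (fun _ => rfl) (fun _ _ _ => rfl)]
    rw [Finset.sum_congr rfl (fun j _ => Finsupp.sum_single_index (h := fun _ m => m) rfl)]
    exact hdegE
  -- values of x σ i
  have hBP : ∀ (σ : Fin ℓ ⊕ Fin (ℓ-2) ≃ Fin (2*ℓ-2)) k,
      (∑ j, (single (P (σ (Sum.inr j))) 1 : C →₀ ℕ)) (P k)
        = if ∃ j, σ (Sum.inr j) = k then 1 else 0 := by
    intro σ k
    rw [Finsupp.finset_sum_apply]
    split_ifs with hex
    · obtain ⟨j0, hj0⟩ := hex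
      rw [Finset.sum_eq_single j0]
      · rw [hj0]; simp
      · intro b _ hb
        rw [Finsupp.single_apply, if_neg]
        intro hc
        have h2 : Sum.inr b = Sum.inr j0 := σ.injective ((hP hc).trans hj0.symm)
        exact hb (Sum.inr.inj h2)
      · intro h; exact absurd (Finset.mem_univ j0) h
    · apply Finset.sum_eq_zero
      intro b _
      rw [Finsupp.single_apply, if_neg]
      intro hc
      exact hex ⟨b, hP hc⟩
  have hB0 : ∀ (σ : Fin ℓ ⊕ Fin (ℓ-2) ≃ Fin (2*ℓ-2)) c, (∀ k, P k ≠ c) →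
      (∑ j, (single (P (σ (Sum.inr j))) 1 : C →₀ ℕ)) c = 0 := by
    intro σ c hc
    rw [Finsupp.finset_sum_apply]
    exact Finset.sum_eq_zero (fun b _ => by rw [Finsupp.single_apply, if_neg (hc _)])
  have hsingleP : ∀ (a : Fin (2*ℓ-2)) k,
      (single (P a) 1 : C →₀ ℕ) (P k) = if a = k then 1 else 0 := by
    intro a k
    rw [Finsupp.single_apply]
    by_cases h : a = k
    · rw [if_pos h, if_pos (by rw [h])]
    · rw [if_neg (fun hc => h (hP hc)), if_neg h]
  have hxPval : ∀ σ i k, (x σ i) (P k) =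
      (if σ (Sum.inl i) = k then 1 else 0) + (if ∃ j, σ (Sum.inr j) = k then 1 else 0) := by
    intro σ i k
    rw [hx, Finsupp.add_apply, Finsupp.add_apply, hBP, hEP, hsingleP, add_zero]
  have hxz : ∀ σ i j, (x σ i) (z j) = nn j := by
    intro σ i j
    rw [hx, Finsupp.add_apply, Finsupp.add_apply, hEz j,
      Finsupp.single_apply, if_neg (hPz _ j),
      hB0 σ (z j) (fun k => hPz k j), zero_add, zero_add]
  have hx0 : ∀ σ i c, (∀ k, P k ≠ c) → (∀ j, z j ≠ c) → (x σ i) c = 0 := by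
    intro σ i c h1 h2
    rw [hx, Finsupp.add_apply, Finsupp.add_apply, hE0 c h2, hB0 σ c h1,
      Finsupp.single_apply, if_neg (h1 _)]
  -- x σ i ≤ H
  have hxle : ∀ σ i, x σ i ≤ H := by
    intro σ i
    rw [Finsupp.le_def]
    intro c
    by_cases hcP : ∃ k, P k = c
    · obtain ⟨k, rfl⟩ := hcP
      rw [hxPval σ i k, hHP k]
      by_cases h1 : σ (Sum.inl i) = k
      · have h2 : ¬ ∃ j, σ (Sum.inr j) = k := by
          rintro ⟨j, hj⟩
          exact absurd (σ.injective (h1.trans hj.symm)) (by simp)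
        rw [if_pos h1, if_neg h2]
      · rw [if_neg h1]
        split_ifs <;> omega
    · by_cases hcz : ∃ j, z j = c
      · obtain ⟨j, rfl⟩ := hcz
        rw [hxz σ i j, hHz j]
        omega
      · push_neg at hcP hcz
        rw [hx0 σ i c hcP hcz]
        exact Nat.zero_le _
  -- degree of x σ i
  have hxdeg : ∀ σ i, ((x σ i).sum fun _ m => m) = n := by
    intro σ i
    rw [hx, Finsupp.sum_add_index' (fun _ => rfl) (fun _ _ _ => rfl),
      Finsupp.sum_add_index' (fun _ => rfl) (fun _ _ _ => rfl),
      Finsupp.sum_single_index (h := fun _ m => m) rfl,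
      ← Finsupp.sum_finset_sum_index (fun _ => rfl) (fun _ _ _ => rfl),
      Finset.sum_congr rfl (fun j _ => Finsupp.sum_single_index (h := fun _ m => m) rfl),
      Finset.sum_const, smul_eq_mul, mul_one, hdegE']
    simp only [Finset.card_univ, Fintype.card_fin]
    omega
  constructor
  · -- part (2)
    intro σ i _
    have hF1 : ∀ k, (x σ i) (P k) ≤ 1 := fun k => (hHP k) ▸ (Finsupp.le_def.mp (hxle σ i) (P k))
    rw [hmult _ (hxle σ i) (hxdeg σ i), key _ hF1]
    exact Finset.prod_congr rfl (fun j _ => by rw [hxz σ i j])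
  · -- converse
    intro F hFdeg hFH _ hFmult
    have hFle : ∀ c, F c ≤ H c := Finsupp.le_def.mp hFH
    have hF1 : ∀ k, F (P k) ≤ 1 := fun k => (hHP k) ▸ hFle (P k)
    have hFz2 : ∀ j, F (z j) ≤ 2 * nn j := fun j => (hHz j) ▸ hFle (z j)
    have hprod : ∏ j, Nat.choose (2 * nn j) (F (z j)) = ∏ j, Nat.choose (2 * nn j) (nn j) := by
      rw [← key F hF1, ← hmult F hFH hFdeg, hFmult]
    have hFz : ∀ j, F (z j) = nn j := by
      intro j
      have hfac := prod_eq_of_le_of_prod_eq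
        (f := fun j => Nat.choose (2 * nn j) (F (z j)))
        (g := fun j => Nat.choose (2 * nn j) (nn j))
        (fun j _ => Nat.choose_pos (hFz2 j))
        (fun j _ => by
          have h := Nat.choose_le_middle (F (z j)) (2 * nn j)
          rwa [show (2 * nn j) / 2 = nn j by omega] at h)
        hprod j (Finset.mem_univ j)
      exact choose_eq_middle (hnn j) (hFz2 j) hfac
    -- the set S of indices where F (P k) = 1
    set S := Finset.univ.filter (fun k => F (P k) = 1) with hS
    have hFP : ∀ k, F (P k) = if k ∈ S then 1 else 0 := by
      intro k
      rw [hS]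
      simp only [Finset.mem_filter, Finset.mem_univ, true_and]
      by_cases h : F (P k) = 1
      · rw [if_pos h, h]
      · rw [if_neg h]
        have := hF1 k
        omega
    -- cardinality of S
    have hsuppF : F.support ⊆ H.support := by
      intro c hc
      rw [Finsupp.mem_support_iff] at hc ⊢
      intro h
      exact hc (Nat.le_zero.mp (h ▸ hFle c))
    have hsum : (F.sum fun _ m => m) = ∑ c ∈ H.support, F c :=
      Finsupp.sum_of_support_subset F hsuppF _ (fun _ _ => rfl)
    have hsum2 : ∑ c ∈ H.support, F c = S.card + (n + 1 - ℓ) := by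
      rw [hsupp, Finset.sum_union hdisjPZ,
        Finset.sum_image (fun a _ b _ h => hP h), Finset.sum_image (fun a _ b _ h => hz h)]
      congr 1
      · rw [Finset.sum_congr rfl (fun k _ => hFP k), Finset.sum_ite_mem,
          Finset.univ_inter, Finset.sum_const, smul_eq_mul, mul_one]
      · rw [Finset.sum_congr rfl (fun j _ => hFz j)]
        exact hdegE
    have hScard : S.card = ℓ - 1 := by
      rw [hFdeg] at hsum
      omega
    -- choose a point s0 ∈ S and build the partition
    have hSne : S.Nonempty := Finset.card_pos.mp (by omega)
    obtain ⟨s0, hs0⟩ := hSne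
    set S' := S.erase s0 with hS'
    have hS'card : S'.card = ℓ - 2 := by
      rw [hS', Finset.card_erase_of_mem hs0, hScard]
      omega
    set T := Sᶜ with hT
    have hs0T : s0 ∉ T := by
      rw [hT, Finset.mem_compl]
      exact fun h => h hs0
    set U := insert s0 T with hU
    have hTcard : T.card = ℓ - 1 := by
      rw [hT, Finset.card_compl, Fintype.card_fin, hScard]
      omega
    have hUcard : U.card = ℓ := by
      rw [hU, Finset.card_insert_of_notMem hs0T, hTcard]
      omega
    have hdUS' : Disjoint U S' := by
      rw [Finset.disjoint_left]
      intro a haU haS'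
      have h1 := Finset.mem_erase.mp haS'
      rcases Finset.mem_insert.mp haU with rfl | haT
      · exact h1.1 rfl
      · exact (Finset.mem_compl.mp haT) h1.2
    have hunion : U ∪ S' = Finset.univ := by
      apply Finset.eq_univ_of_card
      rw [Finset.card_union_of_disjoint hdUS', hUcard, hS'card, Fintype.card_fin]
      omega
    have hS'U : ∀ a : Fin (2*ℓ-2), a ∈ S' ↔ ¬ a ∈ U := by
      intro a
      constructor
      · intro h haU
        exact Finset.disjoint_left.mp hdUS' haU h
      · intro h
        have : a ∈ U ∪ S' := hunion ▸ Finset.mem_univ a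
        rcases Finset.mem_union.mp this with h1 | h1
        · exact absurd h1 h
        · exact h1
    let eU : Fin ℓ ≃ {a // a ∈ U} := (Finset.equivFinOfCardEq hUcard).symm
    let eS' : Fin (ℓ-2) ≃ {a // a ∈ S'} := (Finset.equivFinOfCardEq hS'card).symm
    let σ0 : Fin ℓ ⊕ Fin (ℓ-2) ≃ Fin (2*ℓ-2) :=
      (eU.sumCongr (eS'.trans (Equiv.subtypeEquivRight hS'U))).trans
        (Equiv.sumCompl (fun a => a ∈ U))
    have hσinl : ∀ y, σ0 (Sum.inl y) = ↑(eU y) := fun y => rfl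
    have hσinr : ∀ j, σ0 (Sum.inr j) ∈ S' := by
      intro j
      have : σ0 (Sum.inr j) = ↑(eS' j) := rfl
      rw [this]
      exact (eS' j).2
    set i : Fin ℓ := eU.symm ⟨s0, by rw [hU]; exact Finset.mem_insert_self _ _⟩ with hi
    have hσi : σ0 (Sum.inl i) = s0 := by
      rw [hσinl, hi, Equiv.apply_symm_apply]
    have hσsurj : ∀ k ∈ S', ∃ j, σ0 (Sum.inr j) = k := by
      intro k hk
      refine ⟨eS'.symm ⟨k, hk⟩, ?_⟩
      have : σ0 (Sum.inr (eS'.symm ⟨k, hk⟩)) = ↑(eS' (eS'.symm ⟨k, hk⟩)) := rfl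
      rw [this, Equiv.apply_symm_apply]
    refine ⟨σ0, i, ?_⟩
    ext c
    by_cases hcP : ∃ k, P k = c
    · obtain ⟨k, rfl⟩ := hcP
      rw [hxPval σ0 i k, hFP k]
      by_cases hkS : k ∈ S
      · by_cases hks0 : k = s0
        · subst hks0
          have h2 : ¬ ∃ j, σ0 (Sum.inr j) = k := by
            rintro ⟨j, hj⟩
            have := hσinr j
            rw [hj] at this
            exact (Finset.mem_erase.mp this).1 rfl
          rw [if_pos hkS, if_pos hσi, if_neg h2]
        · have hkS' : k ∈ S' := Finset.mem_erase.mpr ⟨hks0, hkS⟩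
          have h1 : ¬ σ0 (Sum.inl i) = k := by
            rw [hσi]
            exact fun h => hks0 h.symm
          rw [if_pos hkS, if_neg h1, if_pos (hσsurj k hkS')]
      · have h1 : ¬ σ0 (Sum.inl i) = k := by
          rw [hσi]
          rintro rfl
          exact hkS hs0
        have h2 : ¬ ∃ j, σ0 (Sum.inr j) = k := by
          rintro ⟨j, hj⟩
          exact hkS (Finset.mem_of_mem_erase (hj ▸ hσinr j))
        rw [if_neg hkS, if_neg h1, if_neg h2]
    · by_cases hcz : ∃ j, z j = c
      · obtain ⟨j, rfl⟩ := hcz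
        rw [hxz σ0 i j, hFz j]
      · push_neg at hcP hcz
        rw [hx0 σ0 i c hcP hcz]
        exact Nat.le_zero.mp ((hH0 c hcP hcz) ▸ hFle c)
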